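/- With notation as in the twisting symbols: for nonzero p, q ∈ R^3, the operator norm of the commutator satisfies ‖Φ1(q)Φ1(p) − Φ1(p)Φ1(q)‖ ≤ sqrt(|p||q|) |p − q| / (E(|p|) E(|q|)), where Φ1(p) = φ1(|p|)(σ·ω_p), φ1(p) = sqrt((E(p)-1)/(2E(p))), E(p) = sqrt(p^2+1). -/

import Mathlib

open Matrix

/-- The three Pauli matrices. -/
noncomputable def pauli : Fin 3 → Matrix (Fin 2) (Fin 2) ℂ
  | 0 => !![0, 1; 1, 0]
  | 1 => !![0, -Complex.I; Complex.I, 0]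
  | 2 => !![1, 0; 0, -1]

/-- `σ · v` for `v ∈ ℝ³`. -/
noncomputable def sigmaDot (v : EuclideanSpace ℝ (Fin 3)) : Matrix (Fin 2) (Fin 2) ℂ :=
  ∑ i, (v i : ℂ) • pauli i

noncomputable def Erel (p : ℝ) : ℝ := Real.sqrt (p ^ 2 + 1)

noncomputable def phi1 (p : ℝ) : ℝ := Real.sqrt ((Erel p - 1) / (2 * Erel p))

/-- The twisting symbol `Φ₁(p) = φ₁(|p|) σ·ω_p`. -/
noncomputable def Phi1 (p : EuclideanSpace ℝ (Fin 3)) : Matrix (Fin 2) (Fin 2) ℂ :=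
  (phi1 ‖p‖ : ℂ) • sigmaDot (‖p‖⁻¹ • p)

noncomputable def cross3 (v w : EuclideanSpace ℝ (Fin 3)) : EuclideanSpace ℝ (Fin 3) :=
  (WithLp.equiv 2 (Fin 3 → ℝ)).symm
    ![v 1 * w 2 - v 2 * w 1, v 2 * w 0 - v 0 * w 2, v 0 * w 1 - v 1 * w 0]

lemma cross3_apply (v w : EuclideanSpace ℝ (Fin 3)) (i : Fin 3) :
    cross3 v w i = ![v 1 * w 2 - v 2 * w 1, v 2 * w 0 - v 0 * w 2, v 0 * w 1 - v 1 * w 0] i := by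
  simp [cross3]

lemma sigmaDot_eq (v : EuclideanSpace ℝ (Fin 3)) :
    sigmaDot v = !![(v 2 : ℂ), (v 0 : ℂ) - Complex.I * (v 1 : ℂ);
                    (v 0 : ℂ) + Complex.I * (v 1 : ℂ), -(v 2 : ℂ)] := by
  ext i j
  fin_cases i <;> fin_cases j <;>
    simp [sigmaDot, Fin.sum_univ_three, pauli] <;> ring

lemma comm_eq (v w : EuclideanSpace ℝ (Fin 3)) :
    sigmaDot v * sigmaDot w - sigmaDot w * sigmaDot v
      = (2 * Complex.I) • sigmaDot (cross3 v w) := by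
  rw [sigmaDot_eq v, sigmaDot_eq w, sigmaDot_eq (cross3 v w)]
  ext i j
  fin_cases i <;> fin_cases j <;>
    · simp [Matrix.mul_apply, Fin.sum_univ_two, cross3_apply]
      push_cast
      ring_nf
      try simp only [Complex.I_sq]
      try ring_nf

lemma norm_sq_eq (v : EuclideanSpace ℝ (Fin 3)) :
    ‖v‖ ^ 2 = v 0 ^ 2 + v 1 ^ 2 + v 2 ^ 2 := by
  rw [EuclideanSpace.norm_eq, Real.sq_sqrt (by positivity)]
  simp [Fin.sum_univ_three, sq_abs]

lemma mul_self_eq (v : EuclideanSpace ℝ (Fin 3)) :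
    sigmaDot v * sigmaDot v = ((‖v‖ ^ 2 : ℝ) : ℂ) • 1 := by
  rw [sigmaDot_eq v, norm_sq_eq]
  ext i j
  fin_cases i <;> fin_cases j <;>
    · simp [Matrix.mul_apply, Fin.sum_univ_two, Matrix.one_apply]
      push_cast
      ring_nf
      try simp only [Complex.I_sq]
      try ring_nf

lemma conjT_eq (v : EuclideanSpace ℝ (Fin 3)) :
    (sigmaDot v)ᴴ = sigmaDot v := by
  rw [sigmaDot_eq v]
  ext i j
  fin_cases i <;> fin_cases j <;>
    simp [Matrix.conjTranspose_apply, Complex.conj_ofReal] <;> ring_nf <;>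
    simp [Complex.conj_ofReal]

set_option synthInstance.maxHeartbeats 1000000 in
set_option maxHeartbeats 2000000 in
lemma norm_sigmaDot (v : EuclideanSpace ℝ (Fin 3)) :
    ‖Matrix.toEuclideanCLM (𝕜 := ℂ) (n := Fin 2) (sigmaDot v)‖ = ‖v‖ := by
  set T := Matrix.toEuclideanCLM (𝕜 := ℂ) (n := Fin 2) (sigmaDot v) with hT
  have hstar : star T * T = ((‖v‖ ^ 2 : ℝ) : ℂ) • (1 : EuclideanSpace ℂ (Fin 2) →L[ℂ] EuclideanSpace ℂ (Fin 2)) := by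
    rw [hT, ← map_star (Matrix.toEuclideanCLM (𝕜 := ℂ) (n := Fin 2)),
      ← _root_.map_mul (Matrix.toEuclideanCLM (𝕜 := ℂ) (n := Fin 2))]
    rw [Matrix.star_eq_conjTranspose, conjT_eq, mul_self_eq]
    rw [_root_.map_smul, _root_.map_one]
  have hcs : ‖star T * T‖ = ‖T‖ * ‖T‖ := CStarRing.norm_star_mul_self (x := T)
  have h1 : ‖star T * T‖ = ‖v‖ ^ 2 := by
    rw [hstar]
    have h := norm_smul (α := ℂ)
      (β := EuclideanSpace ℂ (Fin 2) →L[ℂ] EuclideanSpace ℂ (Fin 2)) ((‖v‖ ^ 2 : ℝ) : ℂ) 1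
    rw [norm_one, mul_one] at h
    rw [h, Complex.norm_real, Real.norm_eq_abs]
    exact abs_of_nonneg (sq_nonneg ‖v‖)
  have h2 : ‖T‖ * ‖T‖ = ‖v‖ ^ 2 := by rw [← hcs, h1]
  nlinarith [norm_nonneg T, norm_nonneg v]

set_option synthInstance.maxHeartbeats 1000000 in
set_option maxHeartbeats 2000000 in
lemma norm_toCLM_smul (z : ℂ) (M : Matrix (Fin 2) (Fin 2) ℂ) :
    ‖Matrix.toEuclideanCLM (𝕜 := ℂ) (n := Fin 2) (z • M)‖
      = ‖z‖ * ‖Matrix.toEuclideanCLM (𝕜 := ℂ) (n := Fin 2) M‖ := by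
  rw [_root_.map_smul]
  exact norm_smul (α := ℂ)
    (β := EuclideanSpace ℂ (Fin 2) →L[ℂ] EuclideanSpace ℂ (Fin 2)) z _

lemma Erel_one_le (r : ℝ) : 1 ≤ Erel r := by
  have h : (1:ℝ) ≤ r ^ 2 + 1 := by nlinarith [sq_nonneg r]
  calc (1:ℝ) = Real.sqrt 1 := Real.sqrt_one.symm
    _ ≤ Real.sqrt (r ^ 2 + 1) := Real.sqrt_le_sqrt h
    _ = Erel r := rfl

lemma Erel_sq (r : ℝ) : Erel r ^ 2 = r ^ 2 + 1 :=
  Real.sq_sqrt (by positivity)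

lemma phi1_mul_le (r : ℝ) (hr : 0 ≤ r) :
    phi1 r * Erel r * Real.sqrt 2 ≤ r := by
  have hE1 := Erel_one_le r
  have hE2 := Erel_sq r
  have hphi : phi1 r ^ 2 = (Erel r - 1) / (2 * Erel r) :=
    Real.sq_sqrt (by
      apply div_nonneg <;> nlinarith)
  have hs2 : Real.sqrt 2 ^ 2 = 2 := Real.sq_sqrt (by norm_num)
  have hL : 0 ≤ phi1 r * Erel r * Real.sqrt 2 := by
    apply mul_nonneg (mul_nonneg (Real.sqrt_nonneg _) (by linarith)) (Real.sqrt_nonneg _)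
  have hsq : (phi1 r * Erel r * Real.sqrt 2) ^ 2 ≤ r ^ 2 := by
    have : (phi1 r * Erel r * Real.sqrt 2) ^ 2
        = phi1 r ^ 2 * Erel r ^ 2 * 2 := by rw [mul_pow, mul_pow, hs2]
    rw [this, hphi]
    have hEpos : (0:ℝ) < Erel r := by linarith
    rw [div_mul_eq_mul_div, div_mul_eq_mul_div, div_le_iff₀ (by positivity)]
    nlinarith
  calc phi1 r * Erel r * Real.sqrt 2
      = Real.sqrt ((phi1 r * Erel r * Real.sqrt 2) ^ 2) := (Real.sqrt_sq hL).symm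
    _ ≤ Real.sqrt (r ^ 2) := Real.sqrt_le_sqrt hsq
    _ = r := Real.sqrt_sq hr

lemma cross_le (a b : EuclideanSpace ℝ (Fin 3)) (ha : ‖a‖ = 1) (hb : ‖b‖ = 1) :
    ‖cross3 a b‖ ≤ ‖a - b‖ := by
  have ha2 : a 0 ^ 2 + a 1 ^ 2 + a 2 ^ 2 = 1 := by rw [← norm_sq_eq, ha]; norm_num
  have hb2 : b 0 ^ 2 + b 1 ^ 2 + b 2 ^ 2 = 1 := by rw [← norm_sq_eq, hb]; norm_num
  have hsq : ‖cross3 a b‖ ^ 2 ≤ ‖a - b‖ ^ 2 := by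
    rw [norm_sq_eq, norm_sq_eq]
    have e0 : (a - b) 0 = a 0 - b 0 := rfl
    have e1 : (a - b) 1 = a 1 - b 1 := rfl
    have e2 : (a - b) 2 = a 2 - b 2 := rfl
    rw [e0, e1, e2, cross3_apply, cross3_apply, cross3_apply]
    simp only [Matrix.cons_val_zero, Matrix.cons_val_one, Matrix.head_cons,
      Matrix.cons_val_two, Matrix.tail_cons]
    nlinarith [sq_nonneg (a 0 * b 0 + a 1 * b 1 + a 2 * b 2 - 1)]
  calc ‖cross3 a b‖ = Real.sqrt (‖cross3 a b‖ ^ 2) := (Real.sqrt_sq (norm_nonneg _)).symm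
    _ ≤ Real.sqrt (‖a - b‖ ^ 2) := Real.sqrt_le_sqrt hsq
    _ = ‖a - b‖ := Real.sqrt_sq (norm_nonneg _)

lemma unit_diff_le (p q : EuclideanSpace ℝ (Fin 3)) (hp : p ≠ 0) (hq : q ≠ 0) :
    ‖(‖q‖⁻¹ • q) - (‖p‖⁻¹ • p)‖ * Real.sqrt (‖p‖ * ‖q‖) ≤ ‖p - q‖ := by
  have hP : (0:ℝ) < ‖p‖ := norm_pos_iff.mpr hp
  have hQ : (0:ℝ) < ‖q‖ := norm_pos_iff.mpr hq
  have hsq : ‖(‖q‖⁻¹ • q) - (‖p‖⁻¹ • p)‖ ^ 2 * (‖p‖ * ‖q‖) ≤ ‖p - q‖ ^ 2 := by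
    have h1 : ‖(‖q‖⁻¹ • q) - (‖p‖⁻¹ • p)‖ ^ 2
        = 2 - 2 * (inner ℝ p q : ℝ) / (‖p‖ * ‖q‖) := by
      rw [norm_sub_sq_real]
      rw [norm_smul, norm_smul]
      simp only [norm_inv, norm_norm]
      rw [real_inner_smul_left, real_inner_smul_right, real_inner_comm q p]
      rw [inv_mul_cancel₀ hQ.ne', inv_mul_cancel₀ hP.ne']
      field_simp
      ring
    have h2 : ‖p - q‖ ^ 2 = ‖p‖ ^ 2 - 2 * (inner ℝ p q : ℝ) + ‖q‖ ^ 2 :=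
      norm_sub_sq_real p q
    rw [h1, h2]
    have : (2 - 2 * (inner ℝ p q : ℝ) / (‖p‖ * ‖q‖)) * (‖p‖ * ‖q‖)
        = 2 * (‖p‖ * ‖q‖) - 2 * (inner ℝ p q : ℝ) := by field_simp
    rw [this]
    nlinarith [sq_nonneg (‖p‖ - ‖q‖)]
  have hL : 0 ≤ ‖(‖q‖⁻¹ • q) - (‖p‖⁻¹ • p)‖ * Real.sqrt (‖p‖ * ‖q‖) := by positivity
  calc ‖(‖q‖⁻¹ • q) - (‖p‖⁻¹ • p)‖ * Real.sqrt (‖p‖ * ‖q‖)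
      = Real.sqrt (‖(‖q‖⁻¹ • q) - (‖p‖⁻¹ • p)‖ ^ 2 * (‖p‖ * ‖q‖)) := by
        rw [Real.sqrt_mul (sq_nonneg _), Real.sqrt_sq (norm_nonneg _)]
    _ ≤ Real.sqrt (‖p - q‖ ^ 2) := Real.sqrt_le_sqrt hsq
    _ = ‖p - q‖ := Real.sqrt_sq (norm_nonneg _)

set_option synthInstance.maxHeartbeats 1000000 in
set_option maxHeartbeats 2000000 in
/-- The `ℓ²`-operator norm of the commutator of twisting symbols. -/
theorem twisting_commutator_norm (p q : EuclideanSpace ℝ (Fin 3))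
    (hp : p ≠ 0) (hq : q ≠ 0) :
    ‖Matrix.toEuclideanCLM (𝕜 := ℂ) (n := Fin 2) (Phi1 q * Phi1 p - Phi1 p * Phi1 q)‖
      ≤ Real.sqrt (‖p‖ * ‖q‖) * ‖p - q‖ / (Erel ‖p‖ * Erel ‖q‖) := by
  have hP : (0:ℝ) < ‖p‖ := norm_pos_iff.mpr hp
  have hQ : (0:ℝ) < ‖q‖ := norm_pos_iff.mpr hq
  set a := ‖q‖⁻¹ • q with ha
  set b := ‖p‖⁻¹ • p with hb
  have hna : ‖a‖ = 1 := norm_smul_inv_norm hq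
  have hnb : ‖b‖ = 1 := norm_smul_inv_norm hp
  -- rewrite the commutator
  have hcomm : Phi1 q * Phi1 p - Phi1 p * Phi1 q
      = ((phi1 ‖q‖ * phi1 ‖p‖ : ℝ) : ℂ) • ((2 * Complex.I) • sigmaDot (cross3 a b)) := by
    rw [← comm_eq]
    simp only [Phi1, ← ha, ← hb]
    rw [smul_mul_smul_comm, smul_mul_smul_comm, mul_comm ((phi1 ‖p‖ : ℂ)) ((phi1 ‖q‖ : ℂ))]
    rw [← smul_sub]
    push_cast
    ring_nf
  rw [hcomm]
  -- compute the norm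
  have hnorm : ‖Matrix.toEuclideanCLM (𝕜 := ℂ) (n := Fin 2)
      (((phi1 ‖q‖ * phi1 ‖p‖ : ℝ) : ℂ) • ((2 * Complex.I) • sigmaDot (cross3 a b)))‖
      = phi1 ‖q‖ * phi1 ‖p‖ * (2 * ‖cross3 a b‖) := by
    rw [norm_toCLM_smul, norm_toCLM_smul, norm_sigmaDot]
    have h1 : ‖((phi1 ‖q‖ * phi1 ‖p‖ : ℝ) : ℂ)‖ = phi1 ‖q‖ * phi1 ‖p‖ := by
      rw [Complex.norm_real, Real.norm_eq_abs]
      exact abs_of_nonneg (mul_nonneg (Real.sqrt_nonneg _) (Real.sqrt_nonneg _))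
    have h2 : ‖(2 * Complex.I : ℂ)‖ = 2 := by
      rw [norm_mul, Complex.norm_I, mul_one]
      norm_num
    rw [h1, h2, mul_assoc]
  rw [hnorm]
  -- real arithmetic
  have hEp := Erel_one_le ‖p‖
  have hEq := Erel_one_le ‖q‖
  have hphiP := phi1_mul_le ‖p‖ hP.le
  have hphiQ := phi1_mul_le ‖q‖ hQ.le
  have hcrossle : ‖cross3 a b‖ ≤ ‖a - b‖ := cross_le a b hna hnb
  have hdiff : ‖a - b‖ * Real.sqrt (‖p‖ * ‖q‖) ≤ ‖p - q‖ := unit_diff_le p q hp hq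
  set S := Real.sqrt (‖p‖ * ‖q‖) with hS
  have hSpos : 0 < S := Real.sqrt_pos.mpr (by positivity)
  have hS2 : S ^ 2 = ‖p‖ * ‖q‖ := Real.sq_sqrt (by positivity)
  have hs2 : Real.sqrt 2 * Real.sqrt 2 = 2 := Real.mul_self_sqrt (by norm_num)
  have hphiPn : 0 ≤ phi1 ‖p‖ := Real.sqrt_nonneg _
  have hphiQn : 0 ≤ phi1 ‖q‖ := Real.sqrt_nonneg _
  have hcrossn : 0 ≤ ‖cross3 a b‖ := norm_nonneg _
  rw [le_div_iff₀ (by positivity)]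
  -- goal : phi1 Q * phi1 P * (2 * N) * (Ep * Eq) ≤ S * D
  have key1 : phi1 ‖q‖ * phi1 ‖p‖ * (2 * ‖cross3 a b‖) * (Erel ‖p‖ * Erel ‖q‖)
      = (phi1 ‖p‖ * Erel ‖p‖ * Real.sqrt 2) * (phi1 ‖q‖ * Erel ‖q‖ * Real.sqrt 2)
        * ‖cross3 a b‖ := by
    linear_combination
      (-(phi1 ‖p‖ * phi1 ‖q‖ * Erel ‖p‖ * Erel ‖q‖ * ‖cross3 a b‖)) * hs2
  rw [key1]
  have hQEn : 0 ≤ phi1 ‖q‖ * Erel ‖q‖ * Real.sqrt 2 := by positivity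
  have step1 : (phi1 ‖p‖ * Erel ‖p‖ * Real.sqrt 2) * (phi1 ‖q‖ * Erel ‖q‖ * Real.sqrt 2)
      * ‖cross3 a b‖ ≤ ‖p‖ * ‖q‖ * ‖cross3 a b‖ := by
    apply mul_le_mul_of_nonneg_right _ hcrossn
    exact mul_le_mul hphiP hphiQ hQEn hP.le
  have step2 : ‖p‖ * ‖q‖ * ‖cross3 a b‖ ≤ S * ‖p - q‖ := by
    have hN : ‖cross3 a b‖ * S ≤ ‖p - q‖ :=
      le_trans (mul_le_mul_of_nonneg_right hcrossle hSpos.le) hdiff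
    calc ‖p‖ * ‖q‖ * ‖cross3 a b‖ = S * (‖cross3 a b‖ * S) := by
          rw [← hS2]; ring
      _ ≤ S * ‖p - q‖ := mul_le_mul_of_nonneg_left hN hSpos.le
  linarith
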